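/- Let A and B be Banach algebras and T ∈ hom(B, A). If Φ ∈ Z_t^{(ℓ)}(A'') and Ψ ∈ Z_t^{(ℓ)}(B''), then (Φ − T''(Ψ), Ψ) ∈ Z_t^{(ℓ)}((A ×_T B)''). -/

import Mathlib

open ContinuousLinearMap NormedSpace

variable {A B : Type*}
  [NonUnitalNormedRing A] [NormedSpace ℂ A] [IsScalarTower ℂ A A] [SMulCommClass ℂ A A]
  [CompleteSpace A]
  [NonUnitalNormedRing B] [NormedSpace ℂ B] [IsScalarTower ℂ B B] [SMulCommClass ℂ B B]
  [CompleteSpace B]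

/-- The morphism-product multiplication on `A × B`:
`(a₁,b₁)·(a₂,b₂) = (a₁a₂ + a₁T(b₂) + T(b₁)a₂, b₁b₂)`. -/
noncomputable def tMul (T : B →L[ℂ] A) (u v : A × B) : A × B :=
  (u.1 * v.1 + u.1 * T v.2 + T u.2 * v.1, u.2 * v.2)

/-- The ℓ¹ norm `‖(a,b)‖ = ‖a‖ + ‖b‖` on `A × B`. -/
noncomputable def tNorm (u : A × B) : ℝ := ‖u.1‖ + ‖u.2‖

/-- Auxiliary map: for `Φ` in the second dual of `E` and a bundled bilinear
multiplication `M` on `E`, this is `f ↦ (a ↦ Φ (f ∘ M a))`, i.e. `f ↦ Φ · f`. -/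
noncomputable def rAct {E : Type*} [NormedAddCommGroup E] [NormedSpace ℂ E]
    (M : E →L[ℂ] E →L[ℂ] E) (Φ : StrongDual ℂ (StrongDual ℂ E)) : StrongDual ℂ E →L[ℂ] StrongDual ℂ E :=
  (compL ℂ E (StrongDual ℂ E) ℂ Φ).comp
    (((compL ℂ E (E →L[ℂ] E) (StrongDual ℂ E)).flip M).comp (compL ℂ E E ℂ))

/-- The first Arens product `Φ □ Ψ` on the second dual of `E`, where the
multiplication of `E` is given by the bundled bilinear map `M`:
`⟨Φ□Ψ, f⟩ = ⟨Φ, Ψ·f⟩` with `(Ψ·f)(a) = Ψ(f·a)` and `(f·a)(x) = f(ax)`. -/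
noncomputable def arens1 {E : Type*} [NormedAddCommGroup E] [NormedSpace ℂ E]
    (M : E →L[ℂ] E →L[ℂ] E) (Φ Ψ : StrongDual ℂ (StrongDual ℂ E)) : StrongDual ℂ (StrongDual ℂ E) :=
  Φ.comp (rAct M Ψ)

/-- The second Arens product `Φ ◊ Ψ` on the second dual of `E`:
`⟨Φ◊Ψ, f⟩ = ⟨Ψ, f·Φ⟩` with `(f·Φ)(a) = Φ(a·f)` and `(a·f)(x) = f(xa)`. -/
noncomputable def arens2 {E : Type*} [NormedAddCommGroup E] [NormedSpace ℂ E]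
    (M : E →L[ℂ] E →L[ℂ] E) (Φ Ψ : StrongDual ℂ (StrongDual ℂ E)) : StrongDual ℂ (StrongDual ℂ E) :=
  Ψ.comp (rAct M.flip Φ)

/-- Bundled bilinear map `(u,v) ↦ M (f u) (g v)`. -/
noncomputable def bcomp {P E : Type*} [NormedAddCommGroup P] [NormedSpace ℂ P]
    [NormedAddCommGroup E] [NormedSpace ℂ E]
    (M : E →L[ℂ] E →L[ℂ] E) (f g : P →L[ℂ] E) : P →L[ℂ] P →L[ℂ] E :=
  ((compL ℂ P E E).flip g).comp (M.comp f)

/-- The morphism-product multiplication `tMul T`, as a bundled bilinear map;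
`tMulCLM T u v = tMul T u v`. -/
noncomputable def tMulCLM (T : B →L[ℂ] A) : (A × B) →L[ℂ] (A × B) →L[ℂ] (A × B) :=
  ((compL ℂ (A × B) A (A × B) (inl ℂ A B)).comp
    (bcomp (mul ℂ A) (fst ℂ A B) (fst ℂ A B + T.comp (snd ℂ A B)) +
     bcomp (mul ℂ A) (T.comp (snd ℂ A B)) (fst ℂ A B))) +
  ((compL ℂ (A × B) B (A × B) (inr ℂ A B)).comp
    (bcomp (mul ℂ B) (snd ℂ A B) (snd ℂ A B)))

/-- The adjoint `T' : A' → B'`, `T'(f) = f ∘ T`. -/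
noncomputable def dualT (T : B →L[ℂ] A) : StrongDual ℂ A →L[ℂ] StrongDual ℂ B := (compL ℂ B A ℂ).flip T

/-- The double adjoint `T'' : B'' → A''`, `T''(F) = F ∘ T'`. -/
noncomputable def ddT (T : B →L[ℂ] A) : StrongDual ℂ (StrongDual ℂ B) →L[ℂ] StrongDual ℂ (StrongDual ℂ A) :=
  (compL ℂ (StrongDual ℂ A) (StrongDual ℂ B) ℂ).flip (dualT T)

/-- The identification `Θ : A'' × B'' → (A × B)''`, `Θ(Φ,Ψ)(F) = Φ(F∘inl) + Ψ(F∘inr)`,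
i.e. `Θ(Φ,Ψ)(f,g) = Φ(f) + Ψ(g)` under the identification `(A × B)' ≅ A' × B'`. -/
noncomputable def Theta (Φ : StrongDual ℂ (StrongDual ℂ A)) (Ψ : StrongDual ℂ (StrongDual ℂ B)) :
    StrongDual ℂ (StrongDual ℂ (A × B)) :=
  Φ.comp ((compL ℂ A (A × B) ℂ).flip (inl ℂ A B)) +
  Ψ.comp ((compL ℂ B (A × B) ℂ).flip (inr ℂ A B))

/-- The functional `(a,b) ↦ φ(a) + φ(T(b))` on `A × B`, for `φ : A → ℂ`. -/
noncomputable def charExt (T : B →L[ℂ] A) (φ : A →L[ℂ] ℂ) : (A × B) →L[ℂ] ℂ :=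
  φ.comp (fst ℂ A B) + (φ.comp T).comp (snd ℂ A B)

/-- The functional `(a,b) ↦ ψ(b)` on `A × B`, for `ψ : B → ℂ`. -/
noncomputable def charSnd (ψ : B →L[ℂ] ℂ) : (A × B) →L[ℂ] ℂ :=
  ψ.comp (snd ℂ A B)

section Aux

lemma rAct_apply {E : Type*} [NormedAddCommGroup E] [NormedSpace ℂ E]
    (M : E →L[ℂ] E →L[ℂ] E) (Φ : StrongDual ℂ (StrongDual ℂ E)) (f : StrongDual ℂ E) (a : E) :
    rAct M Φ f a = Φ (f.comp (M a)) := rfl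

lemma arens1_apply {E : Type*} [NormedAddCommGroup E] [NormedSpace ℂ E]
    (M : E →L[ℂ] E →L[ℂ] E) (Φ Ψ : StrongDual ℂ (StrongDual ℂ E)) (f : StrongDual ℂ E) :
    arens1 M Φ Ψ f = Φ (rAct M Ψ f) := rfl

lemma arens2_eq_arens1_flip {E : Type*} [NormedAddCommGroup E] [NormedSpace ℂ E]
    (M : E →L[ℂ] E →L[ℂ] E) (Φ Ψ : StrongDual ℂ (StrongDual ℂ E)) :
    arens2 M Φ Ψ = arens1 M.flip Ψ Φ := rfl



lemma tMulCLM_apply (T : B →L[ℂ] A) (u v : A × B) :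
    tMulCLM T u v = (u.1 * v.1 + u.1 * T v.2 + T u.2 * v.1, u.2 * v.2) := by
  simp [tMulCLM, bcomp]

lemma Theta_apply (Φ : StrongDual ℂ (StrongDual ℂ A)) (Ψ : StrongDual ℂ (StrongDual ℂ B)) (f : StrongDual ℂ (A × B)) :
    Theta Φ Ψ f = Φ (f.comp (inl ℂ A B)) + Ψ (f.comp (inr ℂ A B)) := rfl

lemma ddT_apply (T : B →L[ℂ] A) (Ψ : StrongDual ℂ (StrongDual ℂ B)) (φ : StrongDual ℂ A) :
    ddT T Ψ φ = Ψ (φ.comp T) := rfl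

/-- The pullback of a second-dual element along `S`. -/
noncomputable def pbd {E : Type*} [NormedAddCommGroup E] [NormedSpace ℂ E]
    (S : E →L[ℂ] E) (X : StrongDual ℂ (StrongDual ℂ E)) : StrongDual ℂ (StrongDual ℂ E) :=
  X.comp ((compL ℂ E E ℂ).flip S)

lemma pbd_apply {E : Type*} [NormedAddCommGroup E] [NormedSpace ℂ E]
    (S : E →L[ℂ] E) (X : StrongDual ℂ (StrongDual ℂ E)) (f : StrongDual ℂ E) :
    pbd S X f = X (f.comp S) := rfl

/-- Transport of the first Arens product along an algebra homomorphism `S`. -/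
lemma arens1_transport {E : Type*} [NormedAddCommGroup E] [NormedSpace ℂ E]
    (M N : E →L[ℂ] E →L[ℂ] E) (S : E →L[ℂ] E)
    (h : ∀ u v, N (S u) (S v) = S (M u v)) (X Y : StrongDual ℂ (StrongDual ℂ E)) (f : StrongDual ℂ E) :
    arens1 N (pbd S X) (pbd S Y) f = arens1 M X Y (f.comp S) := by
  have hr : (rAct N (pbd S Y) f).comp S = rAct M Y (f.comp S) := by
    ext a
    show Y ((f.comp (N (S a))).comp S) = Y ((f.comp S).comp (M a))
    congr 1
    ext x
    show f (N (S a) (S x)) = f (S (M a x))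
    rw [h]
  show X ((rAct N (pbd S Y) f).comp S) = X (rAct M Y (f.comp S))
  rw [hr]

/-- Componentwise splitting of the first Arens product for a direct-product
multiplication. -/
lemma arens1_prod (MA : A →L[ℂ] A →L[ℂ] A) (MB : B →L[ℂ] B →L[ℂ] B)
    (MP : (A × B) →L[ℂ] (A × B) →L[ℂ] (A × B))
    (hMP : ∀ u v, MP u v = (MA u.1 v.1, MB u.2 v.2))
    (Φ₁ Φ₂ : StrongDual ℂ (StrongDual ℂ A)) (Ψ₁ Ψ₂ : StrongDual ℂ (StrongDual ℂ B)) :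
    arens1 MP (Theta Φ₁ Ψ₁) (Theta Φ₂ Ψ₂) =
      Theta (arens1 MA Φ₁ Φ₂) (arens1 MB Ψ₁ Ψ₂) := by
  ext f
  have hl : (rAct MP (Theta Φ₂ Ψ₂) f).comp (inl ℂ A B)
      = rAct MA Φ₂ (f.comp (inl ℂ A B)) := by
    ext a
    have e1 : (f.comp (MP ((a, 0) : A × B))).comp (inl ℂ A B)
        = (f.comp (inl ℂ A B)).comp (MA a) := by
      ext x
      show f (MP (a, 0) (x, 0)) = f ((MA a x, 0) : A × B)
      rw [hMP]; simp
    have e2 : (f.comp (MP ((a, 0) : A × B))).comp (inr ℂ A B) = 0 := by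
      ext y
      show f (MP (a, 0) (0, y)) = 0
      rw [hMP]; simp; exact map_zero f
    show Φ₂ ((f.comp (MP ((a, 0) : A × B))).comp (inl ℂ A B))
        + Ψ₂ ((f.comp (MP ((a, 0) : A × B))).comp (inr ℂ A B))
        = Φ₂ ((f.comp (inl ℂ A B)).comp (MA a))
    rw [e1, e2]; simp
  have hr : (rAct MP (Theta Φ₂ Ψ₂) f).comp (inr ℂ A B)
      = rAct MB Ψ₂ (f.comp (inr ℂ A B)) := by
    ext b
    have e1 : (f.comp (MP ((0, b) : A × B))).comp (inl ℂ A B) = 0 := by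
      ext x
      show f (MP (0, b) (x, 0)) = 0
      rw [hMP]; simp; exact map_zero f
    have e2 : (f.comp (MP ((0, b) : A × B))).comp (inr ℂ A B)
        = (f.comp (inr ℂ A B)).comp (MB b) := by
      ext y
      show f (MP (0, b) (0, y)) = f ((0, MB b y) : A × B)
      rw [hMP]; simp
    show Φ₂ ((f.comp (MP ((0, b) : A × B))).comp (inl ℂ A B))
        + Ψ₂ ((f.comp (MP ((0, b) : A × B))).comp (inr ℂ A B))
        = Ψ₂ ((f.comp (inr ℂ A B)).comp (MB b))
    rw [e1, e2]; simp
  show Φ₁ ((rAct MP (Theta Φ₂ Ψ₂) f).comp (inl ℂ A B))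
      + Ψ₁ ((rAct MP (Theta Φ₂ Ψ₂) f).comp (inr ℂ A B))
      = Φ₁ (rAct MA Φ₂ (f.comp (inl ℂ A B))) + Ψ₁ (rAct MB Ψ₂ (f.comp (inr ℂ A B)))
  rw [hl, hr]

end Aux
section Aux2
set_option linter.unusedSectionVars false

/-- `θ(a,b) = (a + T b, b)`. -/
noncomputable def thetaMap (T : B →L[ℂ] A) : (A × B) →L[ℂ] (A × B) :=
  ((fst ℂ A B) + T.comp (snd ℂ A B)).prod (snd ℂ A B)

lemma thetaMap_apply (T : B →L[ℂ] A) (u : A × B) :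
    thetaMap T u = (u.1 + T u.2, u.2) := rfl

lemma thetaMap_inv (T : B →L[ℂ] A) (u : A × B) :
    thetaMap (-T) (thetaMap T u) = u := by
  simp [thetaMap_apply]

/-- `θ` intertwines `tMulCLM T` with the direct product multiplication `tMulCLM 0`. -/
lemma thetaMap_hom (T : B →L[ℂ] A) (hT : ∀ x y, T (x * y) = T x * T y) (u v : A × B) :
    tMulCLM (0 : B →L[ℂ] A) (thetaMap T u) (thetaMap T v)
      = thetaMap T (tMulCLM T u v) := by
  simp only [tMulCLM_apply, thetaMap_apply, ContinuousLinearMap.zero_apply, hT]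
  ext <;> simp <;> noncomm_ring

/-- The direct product multiplication splits componentwise. -/
lemma tMulCLM_zero_apply (u v : A × B) :
    tMulCLM (0 : B →L[ℂ] A) u v = ((mul ℂ A) u.1 v.1, (mul ℂ B) u.2 v.2) := by
  simp [tMulCLM_apply]

lemma tMulCLM_zero_flip_apply (u v : A × B) :
    (tMulCLM (0 : B →L[ℂ] A)).flip u v
      = ((mul ℂ A).flip u.1 v.1, (mul ℂ B).flip u.2 v.2) := by
  simp [ContinuousLinearMap.flip_apply, tMulCLM_apply]

/-- Pullback along `θ` sends `Θ(Φ₀, Ψ)` to `Θ(Φ₀ + T''Ψ, Ψ)`. -/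
lemma pbd_theta (T : B →L[ℂ] A) (Φ₀ : StrongDual ℂ (StrongDual ℂ A)) (Ψ : StrongDual ℂ (StrongDual ℂ B)) :
    pbd (thetaMap T) (Theta Φ₀ Ψ) = Theta (Φ₀ + ddT T Ψ) Ψ := by
  ext f
  have e1 : (f.comp (thetaMap T)).comp (inl ℂ A B) = f.comp (inl ℂ A B) := by
    ext a
    show f (thetaMap T (a, 0)) = f ((a, 0) : A × B)
    rw [thetaMap_apply]; simp
  have e2 : (f.comp (thetaMap T)).comp (inr ℂ A B)
      = ((f.comp (inl ℂ A B)).comp T) + f.comp (inr ℂ A B) := by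
    ext b
    show f (thetaMap T (0, b)) = f ((T b, 0) : A × B) + f ((0, b) : A × B)
    rw [thetaMap_apply, ← map_add]
    simp
  show Φ₀ ((f.comp (thetaMap T)).comp (inl ℂ A B))
      + Ψ ((f.comp (thetaMap T)).comp (inr ℂ A B))
      = (Φ₀ + ddT T Ψ) (f.comp (inl ℂ A B)) + Ψ (f.comp (inr ℂ A B))
  rw [e1, e2, map_add]
  simp only [ContinuousLinearMap.add_apply, ddT_apply]
  ring

/-- Every element of `(A × B)''` is of the form `Θ(Φ', Ψ')`. -/
lemma theta_surj (X : StrongDual ℂ (StrongDual ℂ (A × B))) :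
    Theta (X.comp ((compL ℂ (A × B) A ℂ).flip (fst ℂ A B)))
      (X.comp ((compL ℂ (A × B) B ℂ).flip (snd ℂ A B))) = X := by
  ext f
  show X ((f.comp (inl ℂ A B)).comp (fst ℂ A B))
      + X ((f.comp (inr ℂ A B)).comp (snd ℂ A B)) = X f
  rw [← map_add]
  congr 1
  refine ContinuousLinearMap.ext fun u => ?_
  show f ((u.1, 0) : A × B) + f ((0, u.2) : A × B) = f u
  rw [← map_add]
  simp

/-- Reconstruction of `X f` from the pullback along `θ`. -/
lemma pbd_recover (T : B →L[ℂ] A) (X : StrongDual ℂ (StrongDual ℂ (A × B))) (f : StrongDual ℂ (A × B)) :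
    pbd (thetaMap T) X (f.comp (thetaMap (-T))) = X f := by
  rw [pbd_apply]
  congr 1
  refine ContinuousLinearMap.ext fun u => ?_
  show f (thetaMap (-T) (thetaMap T u)) = f u
  rw [thetaMap_inv]

end Aux2

/-- if `Φ` lies in the left topological center of `A''` and `Ψ` in that
of `B''`, then `(Φ − T''(Ψ), Ψ)` lies in the left topological center of `(A ×_T B)''`. -/
theorem left_topological_center_sufficient
    (T : B →L[ℂ] A) (hT : ∀ x y, T (x * y) = T x * T y) (hTn : ‖T‖ ≤ 1)
    (Φ : StrongDual ℂ (StrongDual ℂ A)) (Ψ : StrongDual ℂ (StrongDual ℂ B))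
    (hΦ : ∀ Φ' : StrongDual ℂ (StrongDual ℂ A), arens1 (mul ℂ A) Φ Φ' = arens2 (mul ℂ A) Φ Φ')
    (hΨ : ∀ Ψ' : StrongDual ℂ (StrongDual ℂ B), arens1 (mul ℂ B) Ψ Ψ' = arens2 (mul ℂ B) Ψ Ψ') :
    ∀ X : StrongDual ℂ (StrongDual ℂ (A × B)),
      arens1 (tMulCLM T) (Theta (Φ - ddT T Ψ) Ψ) X =
        arens2 (tMulCLM T) (Theta (Φ - ddT T Ψ) Ψ) X := by
  intro X
  have hom := thetaMap_hom T hT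
  have homf : ∀ u v, (tMulCLM (0 : B →L[ℂ] A)).flip (thetaMap T u) (thetaMap T v)
      = thetaMap T ((tMulCLM T).flip u v) := fun u v => hom v u
  have hcomp : ∀ f : StrongDual ℂ (A × B), (f.comp (thetaMap (-T))).comp (thetaMap T) = f := by
    intro f
    refine ContinuousLinearMap.ext fun u => ?_
    show f (thetaMap (-T) (thetaMap T u)) = f u
    rw [thetaMap_inv]
  set Z := Theta (Φ - ddT T Ψ) Ψ with hZ
  have hZθ : pbd (thetaMap T) Z = Theta Φ Ψ := by
    rw [hZ, pbd_theta]
    congr 1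
    abel
  obtain ⟨Φ₂, Ψ₂, hX2⟩ : ∃ a b, pbd (thetaMap T) X = Theta a b :=
    ⟨_, _, (theta_surj _).symm⟩
  ext f
  have h1 : arens1 (tMulCLM T) Z X f
      = arens1 (tMulCLM (0 : B →L[ℂ] A)) (pbd (thetaMap T) Z) (pbd (thetaMap T) X)
          (f.comp (thetaMap (-T))) := by
    rw [arens1_transport _ _ _ hom, hcomp]
  have h2 : arens2 (tMulCLM T) Z X f
      = arens2 (tMulCLM (0 : B →L[ℂ] A)) (pbd (thetaMap T) Z) (pbd (thetaMap T) X)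
          (f.comp (thetaMap (-T))) := by
    rw [arens2_eq_arens1_flip, arens2_eq_arens1_flip,
        arens1_transport _ _ _ homf, hcomp]
  rw [h1, h2, hZθ, hX2,
      arens1_prod _ _ _ tMulCLM_zero_apply,
      arens2_eq_arens1_flip, arens1_prod _ _ _ tMulCLM_zero_flip_apply,
      hΦ, hΨ, arens2_eq_arens1_flip, arens2_eq_arens1_flip]
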